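/- arXiv:1807.02082 — 2 statements merged into one kernel-verified Lean document; each statement's English description precedes it below -/
import Mathlib

section
/- Let I ⊂ S be a homogeneous Gorenstein ideal with A = S/I Artinian of socle degree ν, and let f_A be a Macaulay inverse system of A. Then f_A has a point of multiplicity ℓ+1 at some nonzero p ∈ C^n if and only if there exists a nonzero linear form L ∈ S_1 such that L^{ν−ℓ} ∈ I and L^{ν−ℓ−1} ∉ I. -/
open MvPolynomial

/-- The iterated differential operator `∏ᵢ (∂/∂zᵢ)^(s i)` as a linear endomorphism. -/
noncomputable def diffOp {n : ℕ} (s : Fin n →₀ ℕ) :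
    Module.End ℂ (MvPolynomial (Fin n) ℂ) :=
  (List.ofFn fun i : Fin n =>
    ((pderiv i : Derivation ℂ (MvPolynomial (Fin n) ℂ) (MvPolynomial (Fin n) ℂ)).toLinearMap
      ^ (s i) : Module.End ℂ (MvPolynomial (Fin n) ℂ))).prod

/-- Polar pairing: `g ∘ F := g(∂/∂z₁,…,∂/∂zₙ) F`. -/
noncomputable def polar {n : ℕ} (g F : MvPolynomial (Fin n) ℂ) : MvPolynomial (Fin n) ℂ :=
  ∑ s ∈ g.support, (coeff s g) • diffOp s F


theorem descFactorial_add' (n k l : ℕ) :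
    n.descFactorial (k + l) = n.descFactorial k * (n - k).descFactorial l := by
  induction l with
  | zero => simp
  | succ l ih =>
    rw [← Nat.add_assoc, Nat.descFactorial_succ, ih, Nat.descFactorial_succ,
      Nat.sub_sub]
    ring

theorem descFactorial_aux (m k : ℕ) : m * (m - 1).descFactorial k = m.descFactorial (k + 1) := by
  cases m with
  | zero => simp
  | succ m => rw [Nat.succ_descFactorial_succ]; simp

theorem pderiv_pow_monomial {n : ℕ} (i : Fin n) (k : ℕ) (t : Fin n →₀ ℕ) (a : ℂ) :
    (((pderiv i : Derivation ℂ (MvPolynomial (Fin n) ℂ) (MvPolynomial (Fin n) ℂ)).toLinearMap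
      ^ k : Module.End ℂ (MvPolynomial (Fin n) ℂ)) (monomial t a))
      = monomial (t - Finsupp.single i k) (a * ((t i).descFactorial k : ℂ)) := by
  induction k generalizing t a with
  | zero => simp
  | succ k ih =>
    rw [pow_succ, Module.End.mul_apply]
    simp only [Derivation.coeFn_coe, pderiv_monomial]
    rw [ih]
    congr 1
    · rw [tsub_tsub, ← Finsupp.single_add, Nat.add_comm 1 k]
    · have h1 : (t - Finsupp.single i 1 : Fin n →₀ ℕ) i = t i - 1 := by simp
      rw [h1, ← descFactorial_aux (t i) k]
      push_cast
      ring

theorem list_single_sum_apply {n : ℕ} (i : Fin n) (g : Fin n → ℕ) :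
    ∀ (L : List (Fin n)), i ∉ L → ((L.map fun j => Finsupp.single j (g j)).sum) i = 0
  | [], _ => by simp
  | (j :: L'), h => by
    simp only [List.map_cons, List.sum_cons, Finsupp.add_apply]
    rw [list_single_sum_apply i g L' (fun hm => h (List.mem_cons_of_mem _ hm)),
      Finsupp.single_apply, if_neg (fun hji : j = i => h (hji ▸ (List.mem_cons_self : j ∈ j :: L')))]

theorem listProd_apply_monomial {n : ℕ} (s : Fin n →₀ ℕ) (t : Fin n →₀ ℕ) (a : ℂ) :
    ∀ (L : List (Fin n)), L.Nodup →
      ((L.map fun i =>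
          ((pderiv i : Derivation ℂ (MvPolynomial (Fin n) ℂ) (MvPolynomial (Fin n) ℂ)).toLinearMap
            ^ (s i) : Module.End ℂ (MvPolynomial (Fin n) ℂ))).prod) (monomial t a)
        = monomial (t - (L.map fun i => Finsupp.single i (s i)).sum)
            (a * (L.map fun i => ((t i).descFactorial (s i) : ℂ)).prod)
  | [], _ => by simp
  | (i :: L'), h => by
    obtain ⟨hi, hnd⟩ := List.nodup_cons.mp h
    simp only [List.map_cons, List.prod_cons, List.sum_cons, Module.End.mul_apply]
    rw [listProd_apply_monomial s t a L' hnd, pderiv_pow_monomial]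
    have hS : ((L'.map fun j => Finsupp.single j (s j)).sum) i = 0 :=
      list_single_sum_apply i (fun j => s j) L' hi
    congr 1
    · rw [tsub_tsub, add_comm]
    · rw [Finsupp.tsub_apply, hS, Nat.sub_zero]
      ring

theorem diffOp_monomial {n : ℕ} (s t : Fin n →₀ ℕ) (a : ℂ) :
    diffOp s (monomial t a)
      = monomial (t - s) (a * ∏ i, ((t i).descFactorial (s i) : ℂ)) := by
  rw [diffOp, List.ofFn_eq_map, listProd_apply_monomial s t a _ (List.nodup_finRange n)]
  rw [← List.ofFn_eq_map, ← List.ofFn_eq_map, Fin.sum_ofFn, Fin.prod_ofFn,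
    Finsupp.univ_sum_single]

theorem polar_def {n : ℕ} (g F : MvPolynomial (Fin n) ℂ) :
    polar g F = Finsupp.sum (AddMonoidAlgebra.coeff g) fun s a => a • diffOp s F := rfl

theorem polar_zero_left {n : ℕ} (F : MvPolynomial (Fin n) ℂ) : polar 0 F = 0 := by
  simp [polar_def]

theorem polar_add_left {n : ℕ} (g h F : MvPolynomial (Fin n) ℂ) :
    polar (g + h) F = polar g F + polar h F := by
  simp only [polar_def, AddMonoidAlgebra.coeff_add]
  exact Finsupp.sum_add_index' (by simp) (by intros; rw [add_smul])

theorem polar_monomial {n : ℕ} (s : Fin n →₀ ℕ) (a : ℂ) (F : MvPolynomial (Fin n) ℂ) :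
    polar (monomial s a) F = a • diffOp s F := by
  rw [polar_def]
  exact Finsupp.sum_single_index (by simp)

theorem polar_sum_left {n : ℕ} {ι : Type*} (T : Finset ι) (G : ι → MvPolynomial (Fin n) ℂ)
    (F : MvPolynomial (Fin n) ℂ) :
    polar (∑ i ∈ T, G i) F = ∑ i ∈ T, polar (G i) F := by
  classical
  induction T using Finset.induction with
  | empty => simp [polar_zero_left]
  | insert _ _ hx ih => rw [Finset.sum_insert hx, polar_add_left, ih, Finset.sum_insert hx]

theorem polar_add_right {n : ℕ} (g F G : MvPolynomial (Fin n) ℂ) :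
    polar g (F + G) = polar g F + polar g G := by
  simp [polar, map_add, smul_add, Finset.sum_add_distrib]

theorem polar_smul_right {n : ℕ} (g F : MvPolynomial (Fin n) ℂ) (c : ℂ) :
    polar g (c • F) = c • polar g F := by
  simp [polar, map_smul, Finset.smul_sum, smul_comm c]

theorem polar_sum_right {n : ℕ} {ι : Type*} (T : Finset ι) (g : MvPolynomial (Fin n) ℂ)
    (G : ι → MvPolynomial (Fin n) ℂ) :
    polar g (∑ i ∈ T, G i) = ∑ i ∈ T, polar g (G i) := by
  classical
  induction T using Finset.induction with
  | empty => simp [polar]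
  | insert _ _ hx ih => rw [Finset.sum_insert hx, polar_add_right, ih, Finset.sum_insert hx]

theorem polar_zero_right {n : ℕ} (g : MvPolynomial (Fin n) ℂ) : polar g 0 = 0 := by
  simp [polar]

theorem diffOp_add_apply {n : ℕ} (s t : Fin n →₀ ℕ) (F : MvPolynomial (Fin n) ℂ) :
    diffOp (s + t) F = diffOp s (diffOp t F) := by
  induction F using MvPolynomial.induction_on' with
  | monomial u a =>
    rw [diffOp_monomial, diffOp_monomial, diffOp_monomial, tsub_tsub, add_comm t s]
    congr 1
    rw [mul_assoc, ← Finset.prod_mul_distrib]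
    congr 1
    refine Finset.prod_congr rfl fun i _ => ?_
    simp only [Finsupp.add_apply, Finsupp.tsub_apply]
    rw [← Nat.cast_mul, ← descFactorial_add' (u i) (t i) (s i), Nat.add_comm (t i) (s i)]
  | add p q hp hq => simp [map_add, hp, hq]

theorem polar_mul {n : ℕ} (g h F : MvPolynomial (Fin n) ℂ) :
    polar (g * h) F = polar g (polar h F) := by
  conv_lhs => rw [← support_sum_monomial_coeff g, ← support_sum_monomial_coeff h]
  rw [Finset.sum_mul_sum]
  rw [polar_sum_left]
  conv_rhs => rw [← support_sum_monomial_coeff g]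
  rw [polar_sum_left]
  refine Finset.sum_congr rfl fun s hs => ?_
  rw [polar_sum_left]
  conv_rhs => rw [← support_sum_monomial_coeff h, polar_sum_left, polar_sum_right]
  refine Finset.sum_congr rfl fun t ht => ?_
  rw [monomial_mul, polar_monomial, polar_monomial t (coeff t h) F, polar_smul_right,
    polar_monomial, diffOp_add_apply, mul_comm, mul_smul]

theorem diffOp_zero {n : ℕ} : diffOp (0 : Fin n →₀ ℕ) = 1 := by
  have : (List.ofFn fun i : Fin n =>
      ((pderiv i : Derivation ℂ (MvPolynomial (Fin n) ℂ) (MvPolynomial (Fin n) ℂ)).toLinearMap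
        ^ ((0 : Fin n →₀ ℕ) i) : Module.End ℂ (MvPolynomial (Fin n) ℂ))).prod = 1 :=
    List.prod_eq_one (by simp)
  simpa [diffOp] using this

theorem polar_C {n : ℕ} (c : ℂ) (F : MvPolynomial (Fin n) ℂ) : polar (C c) F = c • F := by
  rw [← monomial_zero', polar_monomial, diffOp_zero]; rfl

theorem polar_one {n : ℕ} (F : MvPolynomial (Fin n) ℂ) : polar 1 F = F := by
  have := polar_C (n := n) 1 F
  simpa using this

theorem polar_smul_left {n : ℕ} (c : ℂ) (g F : MvPolynomial (Fin n) ℂ) :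
    polar (c • g) F = c • polar g F := by
  rw [smul_eq_C_mul, polar_mul, polar_C]

theorem diffOp_single {n : ℕ} (i : Fin n) (F : MvPolynomial (Fin n) ℂ) :
    diffOp (Finsupp.single i 1) F = pderiv i F := by
  induction F using MvPolynomial.induction_on' with
  | monomial t a =>
    rw [diffOp_monomial, pderiv_monomial]
    congr 1
    rw [Finset.prod_eq_single i (fun j _ hj => by simp [Finsupp.single_apply, Ne.symm hj])
      (by simp)]
    simp [Finsupp.single_apply]
  | add p q hp hq => simp [map_add, hp, hq]

theorem polar_X {n : ℕ} (i : Fin n) (F : MvPolynomial (Fin n) ℂ) :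
    polar (X i) F = pderiv i F := by
  rw [X, polar_monomial, diffOp_single, one_smul]

theorem degree_eq_univ_sum {n : ℕ} (d : Fin n →₀ ℕ) : d.degree = ∑ i, d i :=
  Finset.sum_subset (Finset.subset_univ _)
    (fun x _ hx => Finsupp.notMem_support_iff.mp hx)

theorem polar_isHomogeneous {n m ν : ℕ} {u f : MvPolynomial (Fin n) ℂ}
    (hu : u.IsHomogeneous m) (hf : f.IsHomogeneous ν) :
    (polar u f).IsHomogeneous (ν - m) := by
  rw [← mem_homogeneousSubmodule]
  rw [polar]
  refine Submodule.sum_mem _ fun s hs => Submodule.smul_mem _ _ ?_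
  have hsdeg : s.degree = m := by
    by_contra hne
    exact (mem_support_iff.mp hs) (hu.coeff_eq_zero hne)
  have hdf : diffOp s f = ∑ t ∈ f.support, diffOp s (monomial t (coeff t f)) := by
    conv_lhs => rw [← support_sum_monomial_coeff f]
    rw [map_sum]
  rw [hdf]
  refine Submodule.sum_mem _ fun t ht => ?_
  have htdeg : t.degree = ν := by
    by_contra hne
    exact (mem_support_iff.mp ht) (hf.coeff_eq_zero hne)
  rw [diffOp_monomial]
  by_cases hst : s ≤ t
  · rw [mem_homogeneousSubmodule]
    refine isHomogeneous_monomial _ ?_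
    rw [degree_eq_univ_sum]
    have : ∀ i : Fin n, (t - s) i = t i - s i := fun i => Finsupp.tsub_apply t s i
    calc ∑ i, (t - s) i = ∑ i, (t i - s i) := by simp [this]
      _ = (∑ i, t i) - ∑ i, s i :=
          Finset.sum_tsub_distrib _ fun i _ => (Finsupp.le_def.mp hst) i
      _ = ν - m := by rw [← degree_eq_univ_sum, ← degree_eq_univ_sum, hsdeg, htdeg]
  · have : ∃ i, t i < s i := by
      by_contra hall
      push_neg at hall
      exact hst (Finsupp.le_def.mpr fun i => hall i)
    obtain ⟨i, hi⟩ := this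
    have : (∏ j, (((t j).descFactorial (s j) : ℂ))) = 0 :=
      Finset.prod_eq_zero (Finset.mem_univ i) (by
        rw [Nat.descFactorial_of_lt hi]; simp)
    rw [this, mul_zero, monomial_zero]
    exact Submodule.zero_mem _

theorem eq_C_of_isHomogeneous_zero {n : ℕ} {h : MvPolynomial (Fin n) ℂ}
    (hh : h.IsHomogeneous 0) : h = C (coeff 0 h) := by
  ext d
  by_cases hd : d = 0
  · subst hd; simp
  · rw [hh.coeff_eq_zero (by simpa [Finsupp.degree_eq_zero_iff] using hd), coeff_C,
      if_neg (Ne.symm hd)]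

theorem eval_monomial_univ {n : ℕ} (p : Fin n → ℂ) (t : Fin n →₀ ℕ) (a : ℂ) :
    eval p (monomial t a) = a * ∏ j, p j ^ t j := by
  rw [eval_monomial]
  congr 1
  exact Finsupp.prod_fintype _ _ (by simp)

theorem eval_euler_monomial {n : ℕ} (p : Fin n → ℂ) (t : Fin n →₀ ℕ) (a : ℂ) :
    ∑ i, p i * eval p (pderiv i (monomial t a))
      = (t.degree : ℂ) * eval p (monomial t a) := by
  have key : ∀ i : Fin n, p i * eval p (pderiv i (monomial t a))
      = (t i : ℂ) * eval p (monomial t a) := by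
    intro i
    rw [pderiv_monomial, eval_monomial_univ, eval_monomial_univ]
    rcases Nat.eq_zero_or_pos (t i) with h0 | hpos
    · simp [h0]
    · have h1 : ∀ j ∈ Finset.univ.erase i,
          p j ^ ((t - Finsupp.single i 1 : Fin n →₀ ℕ) j) = p j ^ t j := by
        intro j hj
        have hji : j ≠ i := Finset.ne_of_mem_erase hj
        congr 1
        simp [Finsupp.tsub_apply, Finsupp.single_apply, Ne.symm hji]
      rw [← Finset.mul_prod_erase Finset.univ _ (Finset.mem_univ i),
        ← Finset.mul_prod_erase Finset.univ (fun j => p j ^ t j) (Finset.mem_univ i),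
        Finset.prod_congr rfl h1]
      have h2 : (t - Finsupp.single i 1 : Fin n →₀ ℕ) i = t i - 1 := by simp
      rw [h2]
      have h3 : p i * p i ^ (t i - 1) = p i ^ t i := by
        obtain ⟨m, hm⟩ := Nat.exists_eq_succ_of_ne_zero (Nat.pos_iff_ne_zero.mp hpos)
        rw [hm, Nat.succ_sub_one, pow_succ]
        ring
      calc p i * (a * ↑(t i) * (p i ^ (t i - 1) * ∏ j ∈ Finset.univ.erase i, p j ^ t j))
          = (t i : ℂ) * (a * ((p i * p i ^ (t i - 1)) * ∏ j ∈ Finset.univ.erase i, p j ^ t j)) := by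
            ring
        _ = (t i : ℂ) * (a * (p i ^ t i * ∏ j ∈ Finset.univ.erase i, p j ^ t j)) := by rw [h3]
  rw [Finset.sum_congr rfl fun i _ => key i, ← Finset.sum_mul, degree_eq_univ_sum]
  push_cast
  rfl

theorem Lform_isHomogeneous {n : ℕ} (p : Fin n → ℂ) :
    (∑ i, p i • X i : MvPolynomial (Fin n) ℂ).IsHomogeneous 1 :=
  IsHomogeneous.sum _ _ _ fun i _ => by
    rw [smul_eq_C_mul]; exact isHomogeneous_C_mul_X _ _

theorem polar_Lform {n : ℕ} (p : Fin n → ℂ) (F : MvPolynomial (Fin n) ℂ) :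
    polar (∑ i, p i • X i) F = ∑ i, p i • pderiv i F := by
  rw [polar_sum_left]
  exact Finset.sum_congr rfl fun i _ => by rw [polar_smul_left, polar_X]

theorem eval_polar_Lform {n d : ℕ} (p : Fin n → ℂ) {h : MvPolynomial (Fin n) ℂ}
    (hh : h.IsHomogeneous d) :
    eval p (polar (∑ i, p i • X i) h) = (d : ℂ) * eval p h := by
  rw [polar_Lform]
  conv_lhs => rw [← support_sum_monomial_coeff h]
  simp only [map_sum, smul_eval, Finset.mul_sum]
  rw [Finset.sum_comm]
  conv_rhs =>
    rw [← support_sum_monomial_coeff h, map_sum, Finset.mul_sum]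
  refine Finset.sum_congr rfl fun t ht => ?_
  have htd : t.degree = d := by
    by_contra hne
    exact (mem_support_iff.mp ht) (hh.coeff_eq_zero hne)
  rw [← htd, ← eval_euler_monomial]

theorem polar_Lform_pow {n : ℕ} (p : Fin n → ℂ) :
    ∀ (d : ℕ) (h : MvPolynomial (Fin n) ℂ), h.IsHomogeneous d →
      polar ((∑ i, p i • X i) ^ d) h = C ((d.factorial : ℂ) * eval p h)
  | 0, h, hh => by
    rw [pow_zero, polar_one]
    conv_lhs => rw [eq_C_of_isHomogeneous_zero hh]
    have : eval p h = coeff 0 h := by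
      conv_lhs => rw [eq_C_of_isHomogeneous_zero hh]
      simp
    rw [this]
    simp
  | (d+1), h, hh => by
    have hLh : (polar (∑ i, p i • X i) h).IsHomogeneous d := by
      have := polar_isHomogeneous (Lform_isHomogeneous p) hh
      simpa using this
    rw [pow_succ, polar_mul, polar_Lform_pow p d _ hLh, eval_polar_Lform p hh]
    congr 1
    push_cast [Nat.factorial_succ]
    ring

theorem finsupp_eq_of_le_of_degree_eq {n : ℕ} {s t : Fin n →₀ ℕ} (hle : s ≤ t)
    (hdeg : s.degree = t.degree) : s = t := by
  by_contra hne
  have hex : ∃ i, s i ≠ t i := by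
    by_contra hall
    push_neg at hall
    exact hne (Finsupp.ext hall)
  obtain ⟨i, hi⟩ := hex
  have hlt : ∑ j, s j < ∑ j, t j :=
    Finset.sum_lt_sum (fun j _ => Finsupp.le_def.mp hle j)
      ⟨i, Finset.mem_univ i, lt_of_le_of_ne (Finsupp.le_def.mp hle i) hi⟩
  rw [degree_eq_univ_sum, degree_eq_univ_sum] at hdeg
  omega

theorem main_equiv {n ν m : ℕ} {f : MvPolynomial (Fin n) ℂ} (hf : f.IsHomogeneous ν)
    (hm : m ≤ ν) (p : Fin n → ℂ) :
    (∀ u : MvPolynomial (Fin n) ℂ, u.IsHomogeneous m → eval p (polar u f) = 0) ↔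
      polar ((∑ i, p i • X i) ^ (ν - m)) f = 0 := by
  have hLpow : ((∑ i, p i • X i : MvPolynomial (Fin n) ℂ) ^ (ν - m)).IsHomogeneous (ν - m) := by
    have := (Lform_isHomogeneous p).pow (ν - m)
    simpa using this
  have key : ∀ u : MvPolynomial (Fin n) ℂ, u.IsHomogeneous m →
      polar u (polar ((∑ i, p i • X i) ^ (ν - m)) f)
        = C ((((ν - m).factorial : ℂ)) * eval p (polar u f)) := by
    intro u hu
    rw [← polar_mul, mul_comm, polar_mul]
    exact polar_Lform_pow p (ν - m) _ (polar_isHomogeneous hu hf)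
  constructor
  · intro hall
    set h := polar ((∑ i, p i • X i) ^ (ν - m)) f with hh
    have hhom : h.IsHomogeneous m := by
      have := polar_isHomogeneous hLpow hf
      rwa [Nat.sub_sub_self hm] at this
    ext d
    rw [coeff_zero]
    by_contra hd
    have hddeg : d.degree = m := by
      by_contra hne
      exact hd (hhom.coeff_eq_zero hne)
    have humon : (monomial d 1 : MvPolynomial (Fin n) ℂ).IsHomogeneous m :=
      isHomogeneous_monomial 1 hddeg
    have h1 : polar (monomial d 1) h = 0 := by
      rw [key _ humon, hall _ humon, mul_zero, map_zero]
    have h2 : polar (monomial d 1) h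
        = C (coeff d h * ∏ i, ((d i).factorial : ℂ)) := by
      rw [polar_monomial, one_smul]
      have hsum : diffOp d h = ∑ t ∈ h.support, diffOp d (monomial t (coeff t h)) := by
        conv_lhs => rw [← support_sum_monomial_coeff h]
        rw [map_sum]
      rw [hsum]
      have hsingle : ∀ t ∈ h.support, t ≠ d → diffOp d (monomial t (coeff t h)) = 0 := by
        intro t ht htne
        have htdeg : t.degree = m := by
          by_contra hne
          exact (mem_support_iff.mp ht) (hhom.coeff_eq_zero hne)
        rw [diffOp_monomial]
        by_cases hdt : d ≤ t
        · exact absurd (finsupp_eq_of_le_of_degree_eq hdt (by rw [hddeg, htdeg])).symm htne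
        · have : ∃ i, t i < d i := by
            by_contra hno
            push_neg at hno
            exact hdt (Finsupp.le_def.mpr hno)
          obtain ⟨i, hi⟩ := this
          rw [Finset.prod_eq_zero (Finset.mem_univ i)
            (by rw [Nat.descFactorial_of_lt hi]; simp), mul_zero, monomial_zero]
      rw [Finset.sum_eq_single_of_mem d (mem_support_iff.mpr hd) hsingle]
      rw [diffOp_monomial, tsub_self, monomial_zero']
      congr 1
      congr 1
      exact Finset.prod_congr rfl fun i _ => by rw [Nat.descFactorial_self]
    rw [h1] at h2
    have hz : coeff d h * ∏ i, ((d i).factorial : ℂ) = 0 := by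
      have := h2.symm
      rwa [← C_0, C_inj] at this
    have hprod : (∏ i, ((d i).factorial : ℂ)) ≠ 0 :=
      Finset.prod_ne_zero_iff.mpr fun i _ => Nat.cast_ne_zero.mpr (Nat.factorial_ne_zero _)
    rcases mul_eq_zero.mp hz with h | h
    · exact hd h
    · exact absurd h hprod
  · intro h0 u hu
    have hk := key u hu
    rw [h0, polar_zero_right] at hk
    have h2 : ((ν - m).factorial : ℂ) * eval p (polar u f) = 0 := by
      have := hk.symm
      rwa [← C_0, C_inj] at this
    have hfac : (((ν - m).factorial : ℂ)) ≠ 0 := Nat.cast_ne_zero.mpr (Nat.factorial_ne_zero _)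
    rcases mul_eq_zero.mp h2 with h | h
    · exact absurd h hfac
    · exact h

theorem coeff_Lform {n : ℕ} (c : Fin n → ℂ) (i : Fin n) :
    coeff (Finsupp.single i 1) (∑ j, c j • X j : MvPolynomial (Fin n) ℂ) = c i := by
  classical
  rw [coeff_sum]
  rw [Finset.sum_eq_single_of_mem i (Finset.mem_univ i) (fun j _ hj => by
    rw [coeff_smul, coeff_X',
      if_neg (fun hs => hj ((Finsupp.single_left_inj one_ne_zero).mp hs)), smul_zero])]
  rw [coeff_smul, coeff_X]
  simp

/-- A Macaulay inverse system `f` of `A = S/I` (Artinian Gorenstein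
of socle degree `ν`) has a point of multiplicity `ℓ+1` iff there is a nonzero linear
form `L` with `L^{ν-ℓ} ∈ I` and `L^{ν-ℓ-1} ∉ I`. -/
theorem multiplicity_iff_power_of_linear_form {n ν ℓ : ℕ}
    (I : Ideal (MvPolynomial (Fin n) ℂ))
    (hIhom : ∀ g ∈ I, ∀ k : ℕ, (homogeneousComponent k g : MvPolynomial (Fin n) ℂ) ∈ I)
    (hArt : IsArtinianRing (MvPolynomial (Fin n) ℂ ⧸ I))
    (f : MvPolynomial (Fin n) ℂ) (hf : f.IsHomogeneous ν)
    (hperp : ∀ g : MvPolynomial (Fin n) ℂ, polar g f = 0 ↔ g ∈ I)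
    (hℓ : ℓ + 1 ≤ ν) :
    (∃ p : Fin n → ℂ, p ≠ 0 ∧
        (∀ u : MvPolynomial (Fin n) ℂ, u.IsHomogeneous ℓ → eval p (polar u f) = 0) ∧
        (∃ u : MvPolynomial (Fin n) ℂ, u.IsHomogeneous (ℓ + 1) ∧ eval p (polar u f) ≠ 0)) ↔
      (∃ c : Fin n → ℂ, (∑ i, c i • X i : MvPolynomial (Fin n) ℂ) ≠ 0 ∧
        (∑ i, c i • X i : MvPolynomial (Fin n) ℂ) ^ (ν - ℓ) ∈ I ∧
        (∑ i, c i • X i : MvPolynomial (Fin n) ℂ) ^ (ν - ℓ - 1) ∉ I) := by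
  have hsub : ν - ℓ - 1 = ν - (ℓ + 1) := by omega
  constructor
  · rintro ⟨p, hp0, hall, u, hu, hne⟩
    refine ⟨p, ?_, ?_, ?_⟩
    · intro hL0
      apply hp0
      funext i
      have := coeff_Lform p i
      rw [hL0, coeff_zero] at this
      exact this.symm
    · exact (hperp _).mp ((main_equiv hf (le_of_lt (Nat.lt_of_lt_of_le (Nat.lt_succ_self ℓ) hℓ)) p).mp hall)
    · intro hmem
      rw [hsub] at hmem
      have h0 : polar ((∑ i, p i • X i) ^ (ν - (ℓ + 1))) f = 0 := (hperp _).mpr hmem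
      exact hne (((main_equiv hf hℓ p).mpr h0) u hu)
  · rintro ⟨c, hc0, hmem, hnmem⟩
    refine ⟨c, ?_, ?_, ?_⟩
    · intro hc
      apply hc0
      rw [hc]
      simp
    · exact (main_equiv hf (by omega) c).mpr ((hperp _).mpr hmem)
    · by_contra hno
      push_neg at hno
      have hall : ∀ u : MvPolynomial (Fin n) ℂ, u.IsHomogeneous (ℓ + 1) →
          eval c (polar u f) = 0 := hno
      have h0 := (main_equiv hf hℓ c).mp hall
      exact hnmem (by rw [hsub]; exact (hperp _).mp h0)
end

section
/- Suppose f is a homogeneous form of degree d+1 in C[x_1,...,x_n] and λ is a nontrivial diagonal one-parameter subgroup of SL(n) with integer weights λ_1 ≤ ... ≤ λ_n summing to zero, such that for every i the λ-weight of the initial monomial of ∂f/∂x_i equals d·λ_i. Then f is a direct sum: after the identity change of coordinates there is 1 ≤ a < n with f = g_1(x_1,...,x_a) + g_2(x_{a+1},...,x_n). -/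
open MvPolynomial Finset

lemma coeff_pderiv' {n : ℕ} (i : Fin n) (f : MvPolynomial (Fin n) ℂ) (t : Fin n →₀ ℕ) :
    coeff t (pderiv i f) = ((t i : ℂ) + 1) * coeff (t + Finsupp.single i 1) f := by
  induction f using MvPolynomial.induction_on' with
  | monomial u a =>
    rw [pderiv_monomial, coeff_monomial, coeff_monomial]
    by_cases h : u = t + Finsupp.single i 1
    · subst h
      have h1 : t + Finsupp.single i 1 - Finsupp.single i 1 = t := by
        ext j
        simp only [Finsupp.tsub_apply, Finsupp.add_apply, Finsupp.single_apply]
        by_cases hj : j = i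
        · subst hj; rw [if_pos rfl]; omega
        · rw [if_neg (Ne.symm hj)]; omega
      rw [if_pos h1, if_pos rfl, Finsupp.add_apply, Finsupp.single_apply, if_pos rfl]
      push_cast; ring
    · rw [if_neg h]
      by_cases h2 : u - Finsupp.single i 1 = t
      · have hui : u i = 0 := by
          by_contra hui
          apply h
          ext j
          have := DFunLike.congr_fun h2 j
          simp only [Finsupp.tsub_apply, Finsupp.sub_apply, Finsupp.single_apply, Finsupp.add_apply] at this ⊢
          by_cases hj : j = i
          · subst hj; rw [if_pos rfl] at this ⊢; omega
          · simp only [if_neg (Ne.symm hj)] at this ⊢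
            · omega
        rw [if_pos h2, hui]; simp
      · rw [if_neg h2, mul_zero]
  | add p q hp hq =>
    rw [map_add, coeff_add, coeff_add, hp, hq]; ring

/-- Lemma on destabilizing one-parameter subgroups and direct sums.
If `λ` is a nontrivial diagonal 1-PS of `SL(n)` with integer weights `λ₁ ≤ ⋯ ≤ λₙ`
summing to zero such that for every `i` the `λ`-weight of the initial monomial of
`∂f/∂xᵢ` equals `d·λᵢ`, then `f` is a direct sum. -/
theorem direct_sum_of_initial_weights {n d : ℕ} (lam : Fin n → ℤ)
    (f : MvPolynomial (Fin n) ℂ) (hf : f.IsHomogeneous (d + 1))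
    (hmono : Monotone lam) (hsum : ∑ i, lam i = 0) (hnontriv : lam ≠ 0)
    (hinit : ∀ i : Fin n,
      IsLeast {w : ℤ | ∃ s ∈ (pderiv i f).support, w = ∑ j, (s j : ℤ) * lam j}
        ((d : ℤ) * lam i)) :
    ∃ a : ℕ, 0 < a ∧ a < n ∧
      ∃ g₁ g₂ : MvPolynomial (Fin n) ℂ, g₁ ≠ 0 ∧ g₂ ≠ 0 ∧ f = g₁ + g₂ ∧
        (∀ s ∈ g₁.support, ∀ j : Fin n, a ≤ (j : ℕ) → s j = 0) ∧
        (∀ s ∈ g₂.support, ∀ j : Fin n, (j : ℕ) < a → s j = 0) := by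
  classical
  have hn : 0 < n := by
    rcases Nat.eq_zero_or_pos n with h | h
    · subst h; exact absurd (funext fun i => i.elim0) hnontriv
    · exact h
  set iN : Fin n := ⟨n - 1, by omega⟩ with hiN
  set M : ℤ := lam iN with hMdef
  have hM : ∀ j : Fin n, lam j ≤ M := fun j => hmono (by
    rw [Fin.le_def]; have := j.isLt; simp only [hiN]; omega)
  -- degree of monomials of f
  have hdeg : ∀ s ∈ f.support, ∑ j, (s j : ℤ) = (d : ℤ) + 1 := by
    intro s hs
    have h1 : s.degree = d + 1 := by
      by_contra h
      exact (MvPolynomial.mem_support_iff.mp hs) (hf.coeff_eq_zero h)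
    have h2 : ∑ j, s j = s.degree := by
      rw [Finsupp.degree]
      exact (Finset.sum_subset (Finset.subset_univ _) (by
        intro x _ hx; exact Finsupp.notMem_support_iff.mp hx)).symm
    have : ∑ j, s j = d + 1 := h2.trans h1
    have h3 := congrArg (Nat.cast : ℕ → ℤ) this
    push_cast at h3
    exact h3
  -- key lemma
  have key : ∀ s ∈ f.support, ∀ i : Fin n, lam i = M → s i ≠ 0 →
      ∀ j : Fin n, s j ≠ 0 → lam j = M := by
    intro s hs i hiM hsi
    set t : Fin n →₀ ℕ := s - Finsupp.single i 1 with ht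
    have hts : t + Finsupp.single i 1 = s := by
      ext j
      simp only [ht, Finsupp.add_apply, Finsupp.tsub_apply, Finsupp.single_apply]
      by_cases hj : j = i
      · subst hj; rw [if_pos rfl]; omega
      · rw [if_neg (Ne.symm hj)]; omega
    have hcoef : coeff t (pderiv i f) ≠ 0 := by
      rw [coeff_pderiv', hts]
      refine mul_ne_zero ?_ (MvPolynomial.mem_support_iff.mp hs)
      have h9 : (((t i + 1 : ℕ)) : ℂ) ≠ 0 := Nat.cast_ne_zero.mpr (by omega)
      push_cast at h9
      exact h9
    have hmem : ((d : ℤ) * lam i) ≤ ∑ j, (t j : ℤ) * lam j :=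
      (hinit i).2 ⟨t, MvPolynomial.mem_support_iff.mpr hcoef, rfl⟩
    -- sum of t j = d
    have htj : ∀ j, (t j : ℤ) = (s j : ℤ) - (if j = i then 1 else 0) := by
      intro j
      have := DFunLike.congr_fun hts j
      simp only [Finsupp.add_apply, Finsupp.single_apply] at this
      by_cases hj : j = i
      · subst hj; rw [if_pos rfl] at this ⊢; omega
      · rw [if_neg (fun h => hj h.symm)] at this
        rw [if_neg hj]
        omega
    have hsumt : ∑ j, (t j : ℤ) = (d : ℤ) := by
      simp only [htj]
      rw [Finset.sum_sub_distrib, hdeg s hs, Finset.sum_ite_eq' Finset.univ i (fun _ => (1:ℤ)),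
        if_pos (Finset.mem_univ i)]
      ring
    have hzero : ∑ j, (t j : ℤ) * (M - lam j) = 0 := by
      have hle : ∑ j, (t j : ℤ) * (M - lam j) ≤ 0 := by
        have : ∑ j, (t j : ℤ) * (M - lam j)
            = (∑ j, (t j : ℤ)) * M - ∑ j, (t j : ℤ) * lam j := by
          rw [Finset.sum_mul, ← Finset.sum_sub_distrib]; congr 1; ext j; ring
        rw [this, hsumt, ← hiM]
        omega
      have hge : 0 ≤ ∑ j, (t j : ℤ) * (M - lam j) :=
        Finset.sum_nonneg fun j _ => mul_nonneg (by positivity) (by have := hM j; omega)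
      omega
    have hterm : ∀ j : Fin n, (t j : ℤ) * (M - lam j) = 0 := by
      intro j
      have := (Finset.sum_eq_zero_iff_of_nonneg
        (fun j _ => mul_nonneg (by positivity) (by have := hM j; omega))).mp hzero j
        (Finset.mem_univ j)
      exact this
    intro j hsj
    by_cases hj : j = i
    · subst hj; exact hiM
    · have htjj : t j = s j := by
        have := htj j; simp only [if_neg hj] at this; omega
      have h1 := hterm j
      have h2 : (t j : ℤ) ≠ 0 := by rw [htjj]; exact_mod_cast hsj
      have := hM j
      rcases mul_eq_zero.mp h1 with h | h
      · exact absurd h h2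
      · omega
  -- the index a
  set S : Finset (Fin n) := Finset.univ.filter (fun j => lam j < M) with hS
  set a : ℕ := S.card with ha
  have hiff : ∀ j : Fin n, (j : ℕ) < a ↔ lam j < M := by
    intro j
    constructor
    · intro hja
      by_contra h
      have hjM : lam j = M := le_antisymm (hM j) (by omega)
      have hsub : S ⊆ Finset.Iio j := by
        intro k hk
        rw [hS, Finset.mem_filter] at hk
        rw [Finset.mem_Iio]
        by_contra hkj
        have : lam j ≤ lam k := hmono (not_lt.mp hkj)
        omega
      have := Finset.card_le_card hsub
      rw [Fin.card_Iio] at this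
      omega
    · intro hjM
      have hsub : Finset.Iic j ⊆ S := by
        intro k hk
        rw [Finset.mem_Iic] at hk
        rw [hS, Finset.mem_filter]
        exact ⟨Finset.mem_univ k, lt_of_le_of_lt (hmono hk) hjM⟩
      have := Finset.card_le_card hsub
      rw [Fin.card_Iic] at this
      omega
  have hex : ∃ i : Fin n, lam i < M := by
    by_contra h
    push_neg at h
    have hall : ∀ i, lam i = M := fun i => le_antisymm (hM i) (h i)
    have : ∑ i, lam i = n * M := by
      rw [Finset.sum_congr rfl fun i _ => hall i]
      simp [Finset.card_univ, mul_comm]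
    rw [hsum] at this
    have hM0 : M = 0 := by
      have hne : (n : ℤ) ≠ 0 := by exact_mod_cast hn.ne'
      rcases mul_eq_zero.mp this.symm with h' | h'
      · exact absurd h' hne
      · exact h'
    exact hnontriv (funext fun i => by rw [hall i, hM0]; rfl)
  obtain ⟨i₀, hi₀⟩ := hex
  have ha_pos : 0 < a := by have := (hiff i₀).mpr hi₀; omega
  have ha_lt : a < n := by
    have : ¬ ((iN : ℕ) < a) := by
      rw [hiff, hMdef]; exact lt_irrefl _
    have hiNval : (iN : ℕ) = n - 1 := rfl
    omega
  -- the splitting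
  set P : (Fin n →₀ ℕ) → Prop := fun s => ∀ j : Fin n, s j ≠ 0 → lam j = M with hP
  set g₁ : MvPolynomial (Fin n) ℂ :=
    ∑ s ∈ f.support.filter (fun s => ¬ P s), monomial s (coeff s f) with hg₁
  set g₂ : MvPolynomial (Fin n) ℂ :=
    ∑ s ∈ f.support.filter (fun s => P s), monomial s (coeff s f) with hg₂
  have hcoeff : ∀ (A : Finset (Fin n →₀ ℕ)) (t : Fin n →₀ ℕ),
      coeff t (∑ s ∈ A, monomial s (coeff s f)) = if t ∈ A then coeff t f else 0 := by
    intro A t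
    rw [coeff_sum]
    rw [Finset.sum_congr rfl (fun s _ => coeff_monomial t s (coeff s f))]
    exact Finset.sum_ite_eq' A t (fun s => coeff s f)
  -- a nonzero coefficient in the support of pderiv i f gives a monomial of f containing i
  have hwitness : ∀ i : Fin n, ∃ s ∈ f.support, s i ≠ 0 := by
    intro i
    obtain ⟨t, ht, -⟩ := (hinit i).1
    have hc := MvPolynomial.mem_support_iff.mp ht
    rw [coeff_pderiv'] at hc
    have hc2 : coeff (t + Finsupp.single i 1) f ≠ 0 := fun h => hc (by rw [h, mul_zero])
    refine ⟨t + Finsupp.single i 1, MvPolynomial.mem_support_iff.mpr hc2, ?_⟩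
    simp
  refine ⟨a, ha_pos, ha_lt, g₁, g₂, ?_, ?_, ?_, ?_, ?_⟩
  · -- g₁ ≠ 0
    obtain ⟨s, hs, hsi⟩ := hwitness i₀
    have hnP : ¬ P s := fun h => absurd (h i₀ hsi) (by omega)
    intro h
    have := hcoeff (f.support.filter (fun s => ¬ P s)) s
    rw [← hg₁, h, if_pos (Finset.mem_filter.mpr ⟨hs, hnP⟩)] at this
    exact (MvPolynomial.mem_support_iff.mp hs) ((coeff_zero s).symm.trans this).symm
  · -- g₂ ≠ 0
    obtain ⟨s, hs, hsi⟩ := hwitness iN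
    have hPs : P s := key s hs iN rfl hsi
    intro h
    have := hcoeff (f.support.filter (fun s => P s)) s
    rw [← hg₂, h, if_pos (Finset.mem_filter.mpr ⟨hs, hPs⟩)] at this
    exact (MvPolynomial.mem_support_iff.mp hs) ((coeff_zero s).symm.trans this).symm
  · -- f = g₁ + g₂
    rw [hg₁, hg₂, Finset.sum_filter_not_add_sum_filter]
    exact f.as_sum
  · -- g₁ support
    intro s hs j hja
    have hc := MvPolynomial.mem_support_iff.mp hs
    rw [hg₁, hcoeff] at hc
    have hmem : s ∈ f.support.filter (fun s => ¬ P s) := by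
      by_contra h; rw [if_neg h] at hc; exact hc rfl
    rw [Finset.mem_filter] at hmem
    have hjM : lam j = M := by
      have h1 : ¬ ((j : ℕ) < a) := by omega
      have h2 : ¬ lam j < M := fun hlt => h1 ((hiff j).mpr hlt)
      exact le_antisymm (hM j) (not_lt.mp h2)
    by_contra hsj
    exact hmem.2 (key s hmem.1 j hjM hsj)
  · -- g₂ support
    intro s hs j hja
    have hc := MvPolynomial.mem_support_iff.mp hs
    rw [hg₂, hcoeff] at hc
    have hmem : s ∈ f.support.filter (fun s => P s) := by
      by_contra h; rw [if_neg h] at hc; exact hc rfl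
    rw [Finset.mem_filter] at hmem
    by_contra hsj
    have := hmem.2 j hsj
    have := (hiff j).mp hja
    omega
end
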